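/- Assume the relative quality functions satisfy q_j(A) = 1/(n·C(n−1,|A|)) for every j ∈ C and A ⊆ C∖{j}. Then for every k ∈ {1,…,n}, the signature coordinate satisfies p_k = ∑_{A⊆C, |A|≤n−k+1} d(A) · (|A|/k) · C(n−|A|, k−1) / C(n, k). -/

import Mathlib

open MeasureTheory Finset

/-- Lifetime of the (sub)system on component set `D` with structure function `χ`
(the maximum over the sets `A ⊆ D` with `χ A = 1` of `min_{i ∈ A} T i`). -/
noncomputable def sysLifeOn {Ω : Type*} {n : ℕ} (T : Fin n → Ω → ℝ)
    (D : Finset (Fin n)) (χ : Finset (Fin n) → ℝ) (ω : Ω) : ℝ :=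
  if h : (D.powerset.filter fun A => χ A = 1).Nonempty then
    (D.powerset.filter fun A => χ A = 1).sup' h
      (fun A => if hA : A.Nonempty then A.inf' hA fun i => T i ω else 0)
  else 0

/-- The `k`-th order statistic of the lifetimes `(T i)_{i ∈ M}`. -/
noncomputable def orderStat {Ω : Type*} {n : ℕ} (T : Fin n → Ω → ℝ)
    (M : Finset (Fin n)) (k : ℕ) (ω : Ω) : ℝ :=
  ((M.val.map fun i => T i ω).sort (· ≤ ·)).getD (k - 1) 0

/-- The relative quality function `q_j(A) = Pr(max_{i ∈ C∖A} T_i = T_j < min_{i ∈ A} T_i)`. -/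
noncomputable def relQual {Ω : Type*} [MeasurableSpace Ω] {n : ℕ} (μ : Measure Ω)
    (T : Fin n → Ω → ℝ) (j : Fin n) (A : Finset (Fin n)) : ℝ :=
  (μ {ω | (∀ i ∉ A, T i ω ≤ T j ω) ∧ ∀ i ∈ A, T j ω < T i ω}).toReal

/-- `min_{i ∈ A} T i` (with junk value `0` when `A = ∅`). -/
noncomputable def minOnLife {Ω : Type*} {n : ℕ} (T : Fin n → Ω → ℝ)
    (A : Finset (Fin n)) (ω : Ω) : ℝ :=
  if h : A.Nonempty then A.inf' h fun i => T i ω else 0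

/-- The signed domination function `d(A) = ∑_{B ⊆ A} (-1)^{|A|-|B|} φ(B)`. -/
noncomputable def signedDom {n : ℕ} (φ : Finset (Fin n) → ℝ) (A : Finset (Fin n)) : ℝ :=
  ∑ B ∈ A.powerset, (-1 : ℝ) ^ (A.card - B.card) * φ B


lemma filter_ge_sorted (c : ℝ) : ∀ (l : List ℝ), l.Pairwise (· < ·) →
    ∀ j (hj : j < l.length), c = l.get ⟨j, hj⟩ →
    (l.filter (fun x => decide (c ≤ x))).length = l.length - j := by
  intro l
  induction l with
  | nil => intro _ j hj; simp at hj
  | cons a l ih =>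
    intro hs j hj hc
    rw [List.pairwise_cons] at hs
    cases j with
    | zero =>
      simp only [List.get] at hc
      subst hc
      rw [List.filter_cons, if_pos (by simp)]
      rw [List.filter_eq_self.mpr fun b hb => decide_eq_true (le_of_lt (hs.1 b hb))]
      simp
    | succ j =>
      have hj' : j < l.length := by simpa using hj
      have hc' : c = l.get ⟨j, hj'⟩ := hc
      have hac : a < c := hc' ▸ hs.1 _ (l.get_mem _)
      rw [List.filter_cons, if_neg (by simp [not_le.mpr hac])]
      rw [ih hs.2 j hj' hc']
      simp [Nat.succ_sub_succ]

section
variable {Ω : Type*} {n : ℕ} (T : Fin n → Ω → ℝ) (ω : Ω)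

/-- the sorted list of values -/
noncomputable def vList : List ℝ :=
  ((Finset.univ : Finset (Fin n)).val.map fun i => T i ω).sort (· ≤ ·)

lemma vList_length : (vList T ω).length = n := by
  simp [vList, Multiset.length_sort]

lemma vList_coe : (vList T ω : Multiset ℝ) = (Finset.univ : Finset (Fin n)).val.map fun i => T i ω :=
  Multiset.sort_eq _ _

lemma vList_sorted (hd : ∀ i j : Fin n, i ≠ j → T i ω ≠ T j ω) : (vList T ω).Pairwise (· < ·) := by
  apply ((Multiset.pairwise_sort _ _).sortedLE.sortedLT_of_nodup ?_).pairwise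
  have : ((vList T ω : Multiset ℝ)).Nodup := by
    rw [vList_coe]
    refine Multiset.Nodup.map_on ?_ (Finset.univ.nodup)
    intro i _ j _ hij
    by_contra h
    exact hd i j h hij
  exact this

/-- element of the list is attained -/
lemma vList_attained (j : ℕ) (hj : j < n) :
    ∃ m : Fin n, T m ω = (vList T ω).get ⟨j, by rw [vList_length]; exact hj⟩ := by
  have hmem : (vList T ω).get ⟨j, by rw [vList_length]; exact hj⟩ ∈ (vList T ω) := List.get_mem _ _
  have : (vList T ω).get ⟨j, by rw [vList_length]; exact hj⟩ ∈ (vList T ω : Multiset ℝ) := hmem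
  rw [vList_coe] at this
  obtain ⟨m, _, hm⟩ := Multiset.mem_map.mp this
  exact ⟨m, hm⟩

/-- key counting lemma -/
lemma card_ge_get (hd : ∀ i j : Fin n, i ≠ j → T i ω ≠ T j ω) (j : ℕ) (hj : j < n) :
    (Finset.univ.filter fun i =>
      (vList T ω).get ⟨j, by rw [vList_length]; exact hj⟩ ≤ T i ω).card = n - j := by
  set c := (vList T ω).get ⟨j, by rw [vList_length]; exact hj⟩ with hc
  have h1 : (Finset.univ.filter fun i => c ≤ T i ω).card
      = Multiset.countP (fun x => c ≤ x) ((Finset.univ : Finset (Fin n)).val.map fun i => T i ω) := by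
    rw [Multiset.countP_map]
    rfl
  rw [h1, ← vList_coe T ω]
  rw [Multiset.coe_countP]
  rw [List.countP_eq_length_filter]
  have := filter_ge_sorted c (vList T ω) (vList_sorted T ω hd) j (by rw [vList_length]; exact hj) rfl
  rw [this, vList_length]

lemma orderStat_eq_get (r : ℕ) (h1 : 1 ≤ r) (h2 : r ≤ n) :
    orderStat T Finset.univ r ω = (vList T ω).get ⟨r - 1, by rw [vList_length]; omega⟩ := by
  rw [orderStat]
  exact List.getD_eq_get (vList T ω) 0 ⟨r - 1, by rw [vList_length]; omega⟩

lemma value_position (hd : ∀ i j : Fin n, i ≠ j → T i ω ≠ T j ω) (m : Fin n)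
    (k : ℕ) (hk1 : 1 ≤ k) (hkn : k ≤ n)
    (hcard : (Finset.univ.filter fun i => T m ω ≤ T i ω).card = n + 1 - k) :
    T m ω = orderStat T Finset.univ k ω := by
  have hmem : T m ω ∈ (vList T ω : Multiset ℝ) := by
    rw [vList_coe]; exact Multiset.mem_map.mpr ⟨m, Finset.mem_univ m, rfl⟩
  obtain ⟨⟨j, hj⟩, hget⟩ := List.mem_iff_get.mp hmem
  have hjn : j < n := by rw [vList_length] at hj; exact hj
  have := card_ge_get T ω hd j hjn
  rw [show ((vList T ω).get ⟨j, by rw [vList_length]; exact hjn⟩) = T m ω from hget] at this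
  rw [hcard] at this
  have hjk : j = k - 1 := by omega
  rw [orderStat_eq_get T ω k hk1 hkn, ← hget]
  congr 1
  exact Fin.ext (by simp [hjk])

lemma master (φ : Finset (Fin n) → ℝ)
    (hφ01 : ∀ A, φ A = 0 ∨ φ A = 1)
    (hφmono : ∀ A B : Finset (Fin n), A ⊆ B → φ A ≤ φ B)
    (hφempty : φ ∅ = 0) (hφfull : φ Finset.univ = 1)
    (hd : ∀ i j : Fin n, i ≠ j → T i ω ≠ T j ω)
    (k : ℕ) (hk1 : 1 ≤ k) (hkn : k ≤ n) :
    sysLifeOn T Finset.univ φ ω = orderStat T Finset.univ k ω ↔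
    ∃ p : Fin n × Finset (Fin n),
      (p.1 ∉ p.2 ∧ p.2.card = n - k ∧ φ (insert p.1 p.2) = 1 ∧ φ p.2 = 0) ∧
      (∀ i ∉ p.2, T i ω ≤ T p.1 ω) ∧ (∀ i ∈ p.2, T p.1 ω < T i ω) := by
  classical
  set fs := Finset.univ.powerset.filter (fun A => φ A = 1) with hfs
  have hne : fs.Nonempty :=
    ⟨Finset.univ, Finset.mem_filter.mpr ⟨Finset.mem_powerset_self _, hφfull⟩⟩
  have hAne : ∀ A ∈ fs, A.Nonempty := by
    intro A hA
    rcases Finset.mem_filter.mp hA with ⟨-, h1⟩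
    rw [Finset.nonempty_iff_ne_empty]
    rintro rfl
    rw [hφempty] at h1; norm_num at h1
  have hsys : sysLifeOn T Finset.univ φ ω
      = fs.sup' hne (fun A => if hA : A.Nonempty then A.inf' hA fun i => T i ω else 0) := by
    rw [sysLifeOn, dif_pos]
  set τ := sysLifeOn T Finset.univ φ ω with hτ
  -- F2 : inf' over any path set is ≤ τ
  have F2 : ∀ A (hA : A ∈ fs), (A.inf' (hAne A hA) fun i => T i ω) ≤ τ := by
    intro A hA
    rw [hsys]
    have := Finset.le_sup' (f := fun A => if hA : A.Nonempty then A.inf' hA fun i => T i ω else 0) hA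
    rwa [dif_pos (hAne A hA)] at this
  -- F3 : τ is attained
  have F3 : ∃ A, ∃ (hA : A ∈ fs), τ = A.inf' (hAne A hA) (fun i => T i ω)
      ∧ ∃ i ∈ A, τ = T i ω := by
    obtain ⟨A, hA, hval⟩ := Finset.exists_mem_eq_sup' hne
      (fun A => if hA : A.Nonempty then A.inf' hA fun i => T i ω else 0)
    rw [dif_pos (hAne A hA)] at hval
    obtain ⟨i, hi, hieq⟩ := Finset.exists_mem_eq_inf' (hAne A hA) (fun i => T i ω)
    exact ⟨A, hA, hsys.trans hval, i, hi, (hsys.trans hval).trans hieq⟩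
  constructor
  · -- forward
    intro heq
    set v := orderStat T Finset.univ k ω with hv
    obtain ⟨m, hm⟩ := vList_attained T ω (k-1) (by omega)
    have hmv : T m ω = v := by
      rw [hv, orderStat_eq_get T ω k hk1 hkn, hm]
    set S := Finset.univ.filter (fun i => v < T i ω) with hS
    have hmS : m ∉ S := by simp [hS, hmv]
    have hBS : Finset.univ.filter (fun i => v ≤ T i ω) = insert m S := by
      ext i
      simp only [hS, Finset.mem_filter, Finset.mem_univ, true_and, Finset.mem_insert]
      constructor
      · intro hle
        by_cases him : i = m
        · exact Or.inl him
        · exact Or.inr (lt_of_le_of_ne hle (by rw [← hmv]; exact (hd m i (Ne.symm him)).symm ∘ Eq.symm))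
      · rintro (rfl | hlt)
        · exact le_of_eq hmv.symm
        · exact le_of_lt hlt
    have hcardB : (Finset.univ.filter (fun i => v ≤ T i ω)).card = n + 1 - k := by
      have := card_ge_get T ω hd (k-1) (by omega)
      have hveq : v = (vList T ω).get ⟨k-1, by rw [vList_length]; omega⟩ := by
        rw [hv, orderStat_eq_get T ω k hk1 hkn]
      rw [← hveq] at this
      rw [this]; omega
    have hcardS : S.card = n - k := by
      have h2 : (insert m S).card = S.card + 1 := Finset.card_insert_of_notMem hmS
      rw [hBS, h2] at hcardB; omega
    have hφB : φ (insert m S) = 1 := by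
      have hvτ : v ≤ τ := le_of_eq heq.symm
      rw [hsys] at hvτ
      obtain ⟨A, hA, hle⟩ := (Finset.le_sup'_iff hne).mp hvτ
      rw [dif_pos (hAne A hA)] at hle
      have hsubset : A ⊆ insert m S := by
        intro i hi
        rw [← hBS]
        simp only [Finset.mem_filter, Finset.mem_univ, true_and]
        exact le_trans hle (Finset.inf'_le _ hi)
      have h1 : (1:ℝ) ≤ φ (insert m S) := by
        rcases Finset.mem_filter.mp hA with ⟨-, hA1⟩
        calc (1:ℝ) = φ A := hA1.symm
        _ ≤ φ (insert m S) := hφmono _ _ hsubset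
      rcases hφ01 (insert m S) with h | h
      · rw [h] at h1; linarith
      · exact h
    have hφS : φ S = 0 := by
      rcases hφ01 S with h | h
      · exact h
      · exfalso
        have hSfs : S ∈ fs := Finset.mem_filter.mpr ⟨Finset.mem_powerset.mpr (Finset.subset_univ _), h⟩
        have hlt : v < S.inf' (hAne S hSfs) (fun i => T i ω) := by
          rw [Finset.lt_inf'_iff]
          intro i hi
          exact (Finset.mem_filter.mp hi).2
        have := F2 S hSfs
        rw [heq] at this
        exact absurd (lt_of_lt_of_le hlt this) (lt_irrefl v)
    refine ⟨(m, S), ⟨hmS, hcardS, hφB, hφS⟩, ?_, ?_⟩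
    · intro i hi
      simp only [hS, Finset.mem_filter, Finset.mem_univ, true_and, not_lt] at hi
      rw [hmv]; exact hi
    · intro i hi
      rw [hmv]; exact (Finset.mem_filter.mp hi).2
  · -- backward
    rintro ⟨⟨m, S⟩, ⟨hmS, hcardS, hφB, hφS⟩, Q1, Q2⟩
    simp only at Q1 Q2 ⊢
    have hSeq : S = Finset.univ.filter (fun i => T m ω < T i ω) := by
      ext i
      simp only [Finset.mem_filter, Finset.mem_univ, true_and]
      exact ⟨fun hi => Q2 i hi, fun hlt => by
        by_contra hi
        exact absurd hlt (not_lt.mpr (Q1 i hi))⟩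
    have hBeq : Finset.univ.filter (fun i => T m ω ≤ T i ω) = insert m S := by
      ext i
      simp only [Finset.mem_filter, Finset.mem_univ, true_and, Finset.mem_insert]
      constructor
      · intro hle
        by_cases him : i = m
        · exact Or.inl him
        · refine Or.inr ?_
          rw [hSeq]
          simp only [Finset.mem_filter, Finset.mem_univ, true_and]
          exact lt_of_le_of_ne hle (hd m i (Ne.symm him))
      · rintro (rfl | hi)
        · exact le_refl _
        · exact le_of_lt (Q2 i hi)
    have hcardB : (Finset.univ.filter (fun i => T m ω ≤ T i ω)).card = n + 1 - k := by
      rw [hBeq, Finset.card_insert_of_notMem hmS, hcardS]; omega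
    have hmv : T m ω = orderStat T Finset.univ k ω :=
      value_position T ω hd m k hk1 hkn hcardB
    set v := orderStat T Finset.univ k ω with hv
    have hBfs : insert m S ∈ fs :=
      Finset.mem_filter.mpr ⟨Finset.mem_powerset.mpr (Finset.subset_univ _), hφB⟩
    have hτv : v ≤ τ := by
      have hinf : v ≤ (insert m S).inf' (hAne _ hBfs) (fun i => T i ω) := by
        rw [Finset.le_inf'_iff]
        intro i hi
        rcases Finset.mem_insert.mp hi with rfl | hi
        · exact le_of_eq hmv.symm
        · rw [← hmv]; exact le_of_lt (Q2 i hi)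
      exact le_trans hinf (F2 _ hBfs)
    have hvτ : τ ≤ v := by
      by_contra hlt
      push_neg at hlt
      obtain ⟨A, hA, hAinf, i₀, hi₀, hτi₀⟩ := F3
      have hsubset : A ⊆ S := by
        intro j hj
        rw [hSeq]
        simp only [Finset.mem_filter, Finset.mem_univ, true_and]
        have : τ ≤ T j ω := by rw [hAinf]; exact Finset.inf'_le _ hj
        calc T m ω = v := hmv
        _ < τ := hlt
        _ ≤ T j ω := this
      have h1 : (1:ℝ) ≤ φ S := by
        rcases Finset.mem_filter.mp hA with ⟨-, hA1⟩
        calc (1:ℝ) = φ A := hA1.symm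
        _ ≤ φ S := hφmono _ _ hsubset
      rw [hφS] at h1; linarith
    exact le_antisymm hvτ hτv

end

lemma alt_sum {n : ℕ} (A C : Finset (Fin n)) (hC : C ⊆ A) :
    ∑ B ∈ A.powerset, (if C ⊆ B then ((-1):ℝ)^(B.card - C.card) else 0)
      = if C = A then 1 else 0 := by
  classical
  rw [← Finset.sum_filter]
  have key : ∑ B ∈ A.powerset.filter (fun B => C ⊆ B), ((-1):ℝ)^(B.card - C.card)
      = ∑ B' ∈ (A \ C).powerset, ((-1):ℝ)^(B'.card) := by
    apply Finset.sum_bij' (fun B _ => B \ C) (fun B' _ => B' ∪ C)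
    · intro B hB
      rcases Finset.mem_filter.mp hB with ⟨hBA, hCB⟩
      exact Finset.mem_powerset.mpr
        (Finset.sdiff_subset_sdiff (Finset.mem_powerset.mp hBA) (Finset.Subset.refl C))
    · intro B' hB'
      have h1 : B' ⊆ A \ C := Finset.mem_powerset.mp hB'
      refine Finset.mem_filter.mpr ⟨Finset.mem_powerset.mpr ?_, Finset.subset_union_right⟩
      exact Finset.union_subset (h1.trans (Finset.sdiff_subset)) hC
    · intro B hB
      rcases Finset.mem_filter.mp hB with ⟨hBA, hCB⟩
      exact Finset.sdiff_union_of_subset hCB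
    · intro B' hB'
      have h1 : B' ⊆ A \ C := Finset.mem_powerset.mp hB'
      have hdisj : Disjoint B' C := Finset.disjoint_of_subset_left h1 Finset.sdiff_disjoint
      rw [Finset.union_sdiff_cancel_right hdisj]
    · intro B hB
      rcases Finset.mem_filter.mp hB with ⟨hBA, hCB⟩
      rw [Finset.card_sdiff_of_subset hCB]
  rw [key]
  have h2 : ∑ B' ∈ (A \ C).powerset, ((-1):ℝ)^B'.card = if A \ C = ∅ then 1 else 0 := by
    have := Finset.sum_powerset_neg_one_pow_card (x := A \ C)
    have hcast := congrArg (Int.cast : ℤ → ℝ) this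
    push_cast [apply_ite (Int.cast : ℤ → ℝ)] at hcast
    exact hcast
  rw [h2]
  rcases eq_or_ne C A with rfl | h
  · simp
  · rw [if_neg h, if_neg]
    intro hemp
    rw [Finset.sdiff_eq_empty_iff_subset] at hemp
    exact h (Finset.Subset.antisymm hC hemp)

lemma mobius_inv {n : ℕ} (φ : Finset (Fin n) → ℝ) (A : Finset (Fin n)) :
    ∑ B ∈ A.powerset, signedDom φ B = φ A := by
  classical
  unfold signedDom
  have step1 : ∀ B ∈ A.powerset,
      ∑ C ∈ B.powerset, ((-1):ℝ)^(B.card - C.card) * φ C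
      = ∑ C ∈ A.powerset, (if C ⊆ B then ((-1):ℝ)^(B.card - C.card) * φ C else 0) := by
    intro B hB
    rw [← Finset.sum_filter]
    congr 1
    ext C
    simp only [Finset.mem_powerset, Finset.mem_filter]
    exact ⟨fun h => ⟨h.trans (Finset.mem_powerset.mp hB), h⟩, fun h => h.2⟩
  rw [Finset.sum_congr rfl step1, Finset.sum_comm]
  have step2 : ∀ C ∈ A.powerset,
      ∑ B ∈ A.powerset, (if C ⊆ B then ((-1):ℝ)^(B.card - C.card) * φ C else 0)
      = (if C = A then 1 else 0) * φ C := by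
    intro C hC
    have := alt_sum A C (Finset.mem_powerset.mp hC)
    calc ∑ B ∈ A.powerset, (if C ⊆ B then ((-1):ℝ)^(B.card - C.card) * φ C else 0)
        = (∑ B ∈ A.powerset, (if C ⊆ B then ((-1):ℝ)^(B.card - C.card) else 0)) * φ C := by
          rw [Finset.sum_mul]
          congr 1; ext B
          split <;> simp
      _ = (if C = A then 1 else 0) * φ C := by rw [this]
  rw [Finset.sum_congr rfl step2]
  simp only [ite_mul, one_mul, zero_mul]
  rw [Finset.sum_ite_eq' A.powerset A φ, if_pos (Finset.mem_powerset_self A)]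

lemma count_supersets {n : ℕ} (B : Finset (Fin n)) (a : ℕ) :
    ((Finset.powersetCard a (Finset.univ : Finset (Fin n))).filter (fun A => B ⊆ A)).card
      = if B.card ≤ a then (n - B.card).choose (a - B.card) else 0 := by
  classical
  split_ifs with hba
  · have hcard : ((Finset.univ : Finset (Fin n)) \ B).card = n - B.card := by
      rw [Finset.card_sdiff_of_subset (Finset.subset_univ B)]
      simp
    have := Finset.card_bij'
      (i := fun (A : Finset (Fin n)) (_ : A ∈ (Finset.powersetCard a (Finset.univ : Finset (Fin n))).filter (fun A => B ⊆ A)) => A \ B)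
      (j := fun (A' : Finset (Fin n)) (_ : A' ∈ Finset.powersetCard (a - B.card) ((Finset.univ : Finset (Fin n)) \ B)) => A' ∪ B)
      (hi := ?_) (hj := ?_) (left_inv := ?_) (right_inv := ?_)
    · rw [this, Finset.card_powersetCard, hcard]
    · intro A hA
      rcases Finset.mem_filter.mp hA with ⟨hA1, hBA⟩
      rcases Finset.mem_powersetCard.mp hA1 with ⟨-, hAcard⟩
      refine Finset.mem_powersetCard.mpr ⟨Finset.sdiff_subset_sdiff (Finset.subset_univ A) (Finset.Subset.refl B), ?_⟩
      rw [Finset.card_sdiff_of_subset hBA, hAcard]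
    · intro A' hA'
      rcases Finset.mem_powersetCard.mp hA' with ⟨hsub, hcardA'⟩
      have hdisj : Disjoint A' B := Finset.disjoint_of_subset_left hsub Finset.sdiff_disjoint
      refine Finset.mem_filter.mpr ⟨Finset.mem_powersetCard.mpr ⟨Finset.subset_univ _, ?_⟩, Finset.subset_union_right⟩
      rw [Finset.card_union_of_disjoint hdisj, hcardA']
      omega
    · intro A hA
      rcases Finset.mem_filter.mp hA with ⟨-, hBA⟩
      exact Finset.sdiff_union_of_subset hBA
    · intro A' hA'
      rcases Finset.mem_powersetCard.mp hA' with ⟨hsub, -⟩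
      exact Finset.union_sdiff_cancel_right (Finset.disjoint_of_subset_left hsub Finset.sdiff_disjoint)
  · rw [Finset.card_eq_zero, Finset.filter_eq_empty_iff]
    intro A hA
    rcases Finset.mem_powersetCard.mp hA with ⟨-, hAcard⟩
    intro hBA
    exact hba (hAcard ▸ Finset.card_le_card hBA)

lemma phi_sum {n : ℕ} (φ : Finset (Fin n) → ℝ) (a : ℕ) :
    ∑ A ∈ Finset.powersetCard a (Finset.univ : Finset (Fin n)), φ A
      = ∑ B ∈ (Finset.univ : Finset (Fin n)).powerset, signedDom φ B *
          (if B.card ≤ a then (((n - B.card).choose (a - B.card) : ℕ) : ℝ) else 0) := by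
  classical
  have step1 : ∀ A ∈ Finset.powersetCard a (Finset.univ : Finset (Fin n)),
      φ A = ∑ B ∈ (Finset.univ : Finset (Fin n)).powerset, (if B ⊆ A then signedDom φ B else 0) := by
    intro A hA
    rw [← Finset.sum_filter]
    rw [← mobius_inv φ A]
    congr 1
    ext B
    simp [Finset.mem_powerset]
  rw [Finset.sum_congr rfl step1, Finset.sum_comm]
  apply Finset.sum_congr rfl
  intro B hB
  have hcast : (if B.card ≤ a then (((n - B.card).choose (a - B.card) : ℕ) : ℝ) else 0)
      = ((((Finset.powersetCard a (Finset.univ : Finset (Fin n))).filter (fun A => B ⊆ A)).card : ℕ) : ℝ) := by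
    rw [count_supersets B a]
    split_ifs <;> simp
  rw [hcast]
  calc ∑ A ∈ Finset.powersetCard a (Finset.univ : Finset (Fin n)), (if B ⊆ A then signedDom φ B else 0)
      = ∑ A ∈ (Finset.powersetCard a (Finset.univ : Finset (Fin n))).filter (fun A => B ⊆ A), signedDom φ B := by
        rw [Finset.sum_filter]
    _ = _ := by
        rw [Finset.sum_const, nsmul_eq_mul, mul_comm]

lemma card_P {n : ℕ} (φ : Finset (Fin n) → ℝ)
    (hφ01 : ∀ A, φ A = 0 ∨ φ A = 1)
    (hφmono : ∀ A B : Finset (Fin n), A ⊆ B → φ A ≤ φ B)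
    (k : ℕ) (hk1 : 1 ≤ k) (hkn : k ≤ n) :
    (((((Finset.univ : Finset (Fin n)) ×ˢ (Finset.univ : Finset (Fin n)).powerset).filter
        (fun p => p.1 ∉ p.2 ∧ p.2.card = n - k ∧ φ (insert p.1 p.2) = 1 ∧ φ p.2 = 0)).card : ℕ) : ℝ)
      = ((n + 1 - k : ℕ) : ℝ) * (∑ A ∈ Finset.powersetCard (n+1-k) (Finset.univ : Finset (Fin n)), φ A)
        - (k : ℝ) * (∑ A ∈ Finset.powersetCard (n-k) (Finset.univ : Finset (Fin n)), φ A) := by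
  classical
  set Pairs := ((Finset.univ : Finset (Fin n)) ×ˢ (Finset.univ : Finset (Fin n)).powerset).filter
      (fun p => p.1 ∉ p.2 ∧ p.2.card = n - k) with hPairs
  have hsplit : (((Finset.univ : Finset (Fin n)) ×ˢ (Finset.univ : Finset (Fin n)).powerset).filter
        (fun p => p.1 ∉ p.2 ∧ p.2.card = n - k ∧ φ (insert p.1 p.2) = 1 ∧ φ p.2 = 0))
      = Pairs.filter (fun p => φ (insert p.1 p.2) = 1 ∧ φ p.2 = 0) := by
    rw [hPairs, Finset.filter_filter]
    congr 1
    ext p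
    tauto
  rw [hsplit]
  -- card as a sum of indicators
  have hcard : ((Pairs.filter (fun p => φ (insert p.1 p.2) = 1 ∧ φ p.2 = 0)).card : ℝ)
      = ∑ p ∈ Pairs, (if φ (insert p.1 p.2) = 1 ∧ φ p.2 = 0 then (1:ℝ) else 0) := by
    rw [Finset.card_filter]
    push_cast
    apply Finset.sum_congr rfl
    intro p _
    split_ifs <;> simp
  rw [hcard]
  have hpoint : ∀ p ∈ Pairs, (if φ (insert p.1 p.2) = 1 ∧ φ p.2 = 0 then (1:ℝ) else 0)
      = φ (insert p.1 p.2) - φ p.2 := by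
    intro p hp
    have hmono := hφmono p.2 (insert p.1 p.2) (Finset.subset_insert _ _)
    rcases hφ01 (insert p.1 p.2) with h1 | h1 <;> rcases hφ01 p.2 with h2 | h2
    · simp [h1, h2]
    · exfalso; rw [h1, h2] at hmono; linarith
    · simp [h1, h2]
    · simp [h1, h2]
  rw [Finset.sum_congr rfl hpoint, Finset.sum_sub_distrib]
  -- second sum
  have hsum2 : ∑ p ∈ Pairs, φ p.2
      = (k:ℝ) * (∑ A ∈ Finset.powersetCard (n-k) (Finset.univ : Finset (Fin n)), φ A) := by
    rw [hPairs, Finset.sum_filter, Finset.sum_product]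
    rw [Finset.sum_comm]
    have inner : ∀ S ∈ (Finset.univ : Finset (Fin n)).powerset,
        (∑ m : Fin n, if m ∉ S ∧ S.card = n - k then φ S else 0)
        = if S.card = n - k then (k:ℝ) * φ S else 0 := by
      intro S hS
      by_cases hc : S.card = n - k
      · rw [if_pos hc]
        have : ∀ m : Fin n, (if m ∉ S ∧ S.card = n - k then φ S else 0)
            = if m ∈ Sᶜ then φ S else 0 := by
          intro m; simp [hc, Finset.mem_compl]
        rw [Finset.sum_congr rfl fun m _ => this m, Finset.sum_ite_mem]
        rw [Finset.univ_inter, Finset.sum_const, Finset.card_compl, nsmul_eq_mul, hc]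
        have : n - (n - k) = k := by omega
        rw [Fintype.card_fin, this]
      · rw [if_neg hc]
        apply Finset.sum_eq_zero
        intro m _
        rw [if_neg (by tauto)]
    rw [Finset.sum_congr rfl inner, ← Finset.sum_filter, ← Finset.powersetCard_eq_filter,
      Finset.mul_sum]
  -- first sum
  have hsum1 : ∑ p ∈ Pairs, φ (insert p.1 p.2)
      = ((n + 1 - k : ℕ) : ℝ) * (∑ A ∈ Finset.powersetCard (n+1-k) (Finset.univ : Finset (Fin n)), φ A) := by
    set Pairs' := ((Finset.univ : Finset (Fin n)) ×ˢ (Finset.univ : Finset (Fin n)).powerset).filter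
        (fun p => p.1 ∈ p.2 ∧ p.2.card = n + 1 - k) with hPairs'
    have hbij : ∑ p ∈ Pairs, φ (insert p.1 p.2) = ∑ p ∈ Pairs', φ p.2 := by
      apply Finset.sum_nbij' (i := fun p => (p.1, insert p.1 p.2)) (j := fun p => (p.1, p.2.erase p.1))
      · intro p hp
        rcases Finset.mem_filter.mp hp with ⟨-, hp1, hp2⟩
        refine Finset.mem_filter.mpr ⟨?_, Finset.mem_insert_self _ _, ?_⟩
        · exact Finset.mem_product.mpr ⟨Finset.mem_univ _, Finset.mem_powerset.mpr (Finset.subset_univ _)⟩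
        · rw [Finset.card_insert_of_notMem hp1, hp2]; omega
      · intro p hp
        rcases Finset.mem_filter.mp hp with ⟨-, hp1, hp2⟩
        refine Finset.mem_filter.mpr ⟨?_, Finset.notMem_erase _ _, ?_⟩
        · exact Finset.mem_product.mpr ⟨Finset.mem_univ _, Finset.mem_powerset.mpr (Finset.subset_univ _)⟩
        · rw [Finset.card_erase_of_mem hp1, hp2]; omega
      · intro p hp
        rcases Finset.mem_filter.mp hp with ⟨-, hp1, -⟩
        simp [Finset.erase_insert hp1]
      · intro p hp
        rcases Finset.mem_filter.mp hp with ⟨-, hp1, -⟩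
        simp [Finset.insert_erase hp1]
      · intro p hp
        rfl
    rw [hbij, hPairs', Finset.sum_filter, Finset.sum_product, Finset.sum_comm]
    have inner : ∀ S ∈ (Finset.univ : Finset (Fin n)).powerset,
        (∑ m : Fin n, if m ∈ S ∧ S.card = n + 1 - k then φ S else 0)
        = if S.card = n + 1 - k then ((n+1-k : ℕ):ℝ) * φ S else 0 := by
      intro S hS
      by_cases hc : S.card = n + 1 - k
      · rw [if_pos hc]
        have : ∀ m : Fin n, (if m ∈ S ∧ S.card = n + 1 - k then φ S else 0)
            = if m ∈ S then φ S else 0 := by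
          intro m; simp [hc]
        rw [Finset.sum_congr rfl fun m _ => this m, Finset.sum_ite_mem]
        rw [Finset.univ_inter, Finset.sum_const, nsmul_eq_mul, hc]
      · rw [if_neg hc]
        apply Finset.sum_eq_zero
        intro m _
        rw [if_neg (by tauto)]
    rw [Finset.sum_congr rfl inner, ← Finset.sum_filter, ← Finset.powersetCard_eq_filter,
      Finset.mul_sum]
  rw [hsum1, hsum2]

lemma coeff_identity (n k b : ℕ) (hk1 : 1 ≤ k) (hkn : k ≤ n) (hb : b ≤ n) :
    ((n+1-k : ℕ):ℝ) * (if b ≤ n+1-k then (((n-b).choose (n+1-k-b) : ℕ) : ℝ) else 0)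
      - (k:ℝ) * (if b ≤ n-k then (((n-b).choose (n-k-b) : ℕ) : ℝ) else 0)
    = (if b ≤ n+1-k then (b:ℝ) * (((n-b).choose (k-1) : ℕ) : ℝ) else 0) := by
  rcases le_or_gt b (n-k) with h1 | h1
  · have h2 : b ≤ n+1-k := by omega
    rw [if_pos h1, if_pos h2, if_pos h2]
    set m := n - b with hm
    have e1 : (n-b).choose (n+1-k-b) = m.choose (k-1) := by
      rw [show n+1-k-b = m - (k-1) by omega]
      exact Nat.choose_symm (by omega)
    have e2 : (n-b).choose (n-k-b) = m.choose k := by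
      rw [show n-k-b = m - k by omega]
      exact Nat.choose_symm (by omega)
    have e3 : m.choose k * k = m.choose (k-1) * (m - (k-1)) := by
      have := Nat.choose_succ_right_eq m (k-1)
      rwa [show k-1+1 = k by omega] at this
    -- ℕ identity : (n+1-k) * C(m,k-1) = b * C(m,k-1) + k * C(m,k)
    have key : (n+1-k) * m.choose (k-1) = b * m.choose (k-1) + k * m.choose k := by
      have h4 : n+1-k = b + (m - (k-1)) := by omega
      rw [h4, add_mul]
      congr 1
      rw [mul_comm k _, e3, mul_comm]
    rw [e1, e2]
    have := congrArg (Nat.cast : ℕ → ℝ) key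
    push_cast at this
    linarith
  · rcases le_or_gt b (n+1-k) with h2 | h2
    · have hb' : b = n+1-k := by omega
      rw [if_pos h2, if_neg (by omega), if_pos h2]
      rw [show n+1-k-b = 0 by omega, Nat.choose_zero_right]
      rw [show n-b = k-1 by omega, Nat.choose_self]
      rw [hb']
      push_cast
      ring
    · rw [if_neg (by omega), if_neg (by omega), if_neg (by omega)]
      ring

set_option maxHeartbeats 1000000 in
theorem stmt_12 {Ω : Type*} [MeasurableSpace Ω] (μ : Measure Ω) [IsProbabilityMeasure μ]
    {n : ℕ} (T : Fin n → Ω → ℝ) (hTmeas : ∀ i, Measurable (T i))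
    (hTnonneg : ∀ i ω, 0 ≤ T i ω)
    (hties : ∀ i j : Fin n, i ≠ j → μ {ω | T i ω = T j ω} = 0)
    (φ : Finset (Fin n) → ℝ)
    (hφ01 : ∀ A, φ A = 0 ∨ φ A = 1)
    (hφmono : ∀ A B : Finset (Fin n), A ⊆ B → φ A ≤ φ B)
    (hφempty : φ ∅ = 0) (hφfull : φ Finset.univ = 1)
    (hq : ∀ (j : Fin n) (A : Finset (Fin n)), j ∉ A →
      relQual μ T j A = 1 / ((n : ℝ) * ((n - 1).choose A.card : ℕ)))
    (k : ℕ) (hk1 : 1 ≤ k) (hkn : k ≤ n) :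
    (μ {ω | sysLifeOn T Finset.univ φ ω = orderStat T Finset.univ k ω}).toReal =
      ∑ A ∈ (Finset.univ : Finset (Fin n)).powerset.filter
          (fun A => A.card ≤ n - k + 1),
        signedDom φ A * ((A.card : ℝ) / (k : ℝ)) *
          ((((n - A.card).choose (k - 1) : ℕ) : ℝ) / ((n.choose k : ℕ) : ℝ)) := by

  classical
  have hn1 : 1 ≤ n := le_trans hk1 hkn
  set D : Set Ω := {ω | ∀ i j : Fin n, i ≠ j → T i ω ≠ T j ω} with hD
  have hDmeas : MeasurableSet D := by
    have hDeq : D = ⋂ (i : Fin n), ⋂ (j : Fin n), ⋂ (_ : i ≠ j), {ω | T i ω ≠ T j ω} := by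
      ext ω; simp [hD]
    rw [hDeq]
    refine MeasurableSet.iInter fun i => MeasurableSet.iInter fun j =>
      MeasurableSet.iInter fun hij => ?_
    have := (measurableSet_eq_fun (hTmeas i) (hTmeas j)).compl
    simpa [Set.compl_setOf] using this
  have hDc : μ Dᶜ = 0 := by
    have hsub : Dᶜ ⊆ ⋃ (i : Fin n), ⋃ (j : Fin n), ⋃ (_ : i ≠ j), {ω | T i ω = T j ω} := by
      intro ω hω
      simp only [hD, Set.mem_compl_iff, Set.mem_setOf_eq] at hω
      push_neg at hω
      obtain ⟨i, j, hij, heq⟩ := hω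
      exact Set.mem_iUnion.mpr ⟨i, Set.mem_iUnion.mpr ⟨j, Set.mem_iUnion.mpr ⟨hij, heq⟩⟩⟩
    refine measure_mono_null hsub ?_
    refine measure_iUnion_null fun i => measure_iUnion_null fun j =>
      measure_iUnion_null fun hij => hties i j hij
  set P : Finset (Fin n × Finset (Fin n)) :=
    (((Finset.univ : Finset (Fin n)) ×ˢ (Finset.univ : Finset (Fin n)).powerset).filter
      (fun p => p.1 ∉ p.2 ∧ p.2.card = n - k ∧ φ (insert p.1 p.2) = 1 ∧ φ p.2 = 0)) with hP
  set Q : Fin n × Finset (Fin n) → Set Ω := fun p =>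
      {ω | (∀ i ∉ p.2, T i ω ≤ T p.1 ω) ∧ ∀ i ∈ p.2, T p.1 ω < T i ω} with hQ
  have hQmeas : ∀ p, MeasurableSet (Q p) := by
    intro p
    have hQeq : Q p = (⋂ (i : Fin n), ⋂ (_ : i ∉ p.2), {ω | T i ω ≤ T p.1 ω})
        ∩ (⋂ (i : Fin n), ⋂ (_ : i ∈ p.2), {ω | T p.1 ω < T i ω}) := by
      ext ω; simp [hQ]
    rw [hQeq]
    refine MeasurableSet.inter ?_ ?_
    · exact MeasurableSet.iInter fun i => MeasurableSet.iInter fun _ =>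
        measurableSet_le (hTmeas i) (hTmeas p.1)
    · exact MeasurableSet.iInter fun i => MeasurableSet.iInter fun _ =>
        measurableSet_lt (hTmeas p.1) (hTmeas i)
  have hPmem : ∀ p : Fin n × Finset (Fin n), p ∈ P ↔
      (p.1 ∉ p.2 ∧ p.2.card = n - k ∧ φ (insert p.1 p.2) = 1 ∧ φ p.2 = 0) := by
    intro p
    rw [hP, Finset.mem_filter]
    simp [Finset.mem_product]
  set E : Set Ω := {ω | sysLifeOn T Finset.univ φ ω = orderStat T Finset.univ k ω} with hE
  -- pointwise identification on D
  have hED : E ∩ D = (⋃ p ∈ P, Q p) ∩ D := by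
    ext ω
    simp only [Set.mem_inter_iff, hE, Set.mem_setOf_eq, Set.mem_iUnion, exists_prop]
    constructor
    · rintro ⟨hsy, hω⟩
      obtain ⟨p, hp1, hp2⟩ :=
        (master T ω φ hφ01 hφmono hφempty hφfull hω k hk1 hkn).mp hsy
      exact ⟨⟨p, (hPmem p).mpr hp1, hp2⟩, hω⟩
    · rintro ⟨⟨p, hpP, hpQ⟩, hω⟩
      refine ⟨(master T ω φ hφ01 hφmono hφempty hφfull hω k hk1 hkn).mpr
        ⟨p, (hPmem p).mp hpP, hpQ⟩, hω⟩
  -- uniqueness on D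
  have huniq : ∀ p q, p ∈ P → q ∈ P → p ≠ q → Q p ∩ Q q ⊆ Dᶜ := by
    intro p q hp hq hpq ω hω
    rcases hω with ⟨hωp, hωq⟩
    intro hωD
    apply hpq
    have hd : ∀ i j : Fin n, i ≠ j → T i ω ≠ T j ω := hωD
    obtain ⟨hp1, hp2, -, -⟩ := (hPmem p).mp hp
    obtain ⟨hq1, hq2, -, -⟩ := (hPmem q).mp hq
    rcases hωp with ⟨hp3, hp4⟩
    rcases hωq with ⟨hq3, hq4⟩
    have hfilt : ∀ (r : Fin n × Finset (Fin n)), ((∀ i ∉ r.2, T i ω ≤ T r.1 ω) ∧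
        ∀ i ∈ r.2, T r.1 ω < T i ω) →
        r.2 = Finset.univ.filter (fun i => T r.1 ω < T i ω) := by
      rintro r ⟨h3, h4⟩
      ext i
      simp only [Finset.mem_filter, Finset.mem_univ, true_and]
      exact ⟨fun hi => h4 i hi, fun hlt => by
        by_contra hi
        exact absurd hlt (not_lt.mpr (h3 i hi))⟩
    have haux : ∀ r s : Fin n × Finset (Fin n), r ∈ P → s ∈ P →
        ((∀ i ∉ r.2, T i ω ≤ T r.1 ω) ∧ ∀ i ∈ r.2, T r.1 ω < T i ω) →
        ((∀ i ∉ s.2, T i ω ≤ T s.1 ω) ∧ ∀ i ∈ s.2, T s.1 ω < T i ω) →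
        T r.1 ω < T s.1 ω → False := by
      intro r s hrP hsP hr hs hlt
      obtain ⟨hr1, hr2, -, -⟩ := (hPmem r).mp hrP
      obtain ⟨hs1, hs2, -, -⟩ := (hPmem s).mp hsP
      have hrf := hfilt r hr
      have hsub : insert s.1 s.2 ⊆ r.2 := by
        intro i hi
        rw [hrf]
        simp only [Finset.mem_filter, Finset.mem_univ, true_and]
        rcases Finset.mem_insert.mp hi with rfl | hi
        · exact hlt
        · exact lt_trans hlt (hs.2 i hi)
      have hcard := Finset.card_le_card hsub
      rw [Finset.card_insert_of_notMem hs1, hs2, hr2] at hcard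
      omega
    rcases lt_trichotomy (T p.1 ω) (T q.1 ω) with hlt | heq | hlt
    · exact absurd (haux p q hp hq ⟨hp3, hp4⟩ ⟨hq3, hq4⟩ hlt) id
    · have h11 : p.1 = q.1 := by
        by_contra hne
        exact hd p.1 q.1 hne heq
      have h22 : p.2 = q.2 := by
        rw [hfilt p ⟨hp3, hp4⟩, hfilt q ⟨hq3, hq4⟩, h11]
      exact Prod.ext h11 h22
    · exact absurd (haux q p hq hp ⟨hq3, hq4⟩ ⟨hp3, hp4⟩ hlt) id
  -- measure computation
  have hmeasE : μ E = μ (⋃ p ∈ P, Q p) := by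
    have h1 : μ E = μ (E ∩ D) := by
      have h := measure_inter_add_diff (μ := μ) E hDmeas
      have h2 : μ (E \ D) = 0 :=
        measure_mono_null (fun ω hω => hω.2) hDc
      rw [← h, h2, add_zero]
    have h3 : μ (⋃ p ∈ P, Q p) = μ ((⋃ p ∈ P, Q p) ∩ D) := by
      have h := measure_inter_add_diff (μ := μ) (⋃ p ∈ P, Q p) hDmeas
      have h2 : μ ((⋃ p ∈ P, Q p) \ D) = 0 :=
        measure_mono_null (fun ω hω => hω.2) hDc
      rw [← h, h2, add_zero]
    rw [h1, hED, ← h3]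
  have hsum : μ (⋃ p ∈ P, Q p) = ∑ p ∈ P, μ (Q p) := by
    refine MeasureTheory.measure_biUnion_finset₀ ?_ (fun p _ => (hQmeas p).nullMeasurableSet)
    intro p hp q hq hpq
    exact measure_mono_null (huniq p q hp hq hpq) hDc
  have htoReal : (μ E).toReal = ∑ p ∈ P, (μ (Q p)).toReal := by
    rw [hmeasE, hsum, ENNReal.toReal_sum (fun p _ => measure_ne_top μ _)]
  have hterm : ∀ p ∈ P, (μ (Q p)).toReal = 1 / ((n : ℝ) * (((n - 1).choose (n - k) : ℕ) : ℝ)) := by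
    intro p hp
    obtain ⟨hp1, hp2, -, -⟩ := (hPmem p).mp hp
    have := hq p.1 p.2 hp1
    rw [relQual] at this
    rw [hQ]
    rw [this, hp2]
  rw [show (μ {ω | sysLifeOn T Finset.univ φ ω = orderStat T Finset.univ k ω}).toReal
      = (μ E).toReal from rfl]
  rw [htoReal, Finset.sum_congr rfl hterm, Finset.sum_const, nsmul_eq_mul]
  -- combinatorial finish
  have hPcard := card_P φ hφ01 hφmono k hk1 hkn
  rw [← hP] at hPcard
  rw [phi_sum φ (n+1-k), phi_sum φ (n-k)] at hPcard
  rw [hPcard]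
  -- convert RHS of the goal to a sum over the full powerset
  rw [Finset.sum_filter]
  rw [Finset.mul_sum, Finset.mul_sum, ← Finset.sum_sub_distrib, Finset.sum_mul]
  apply Finset.sum_congr rfl
  intro B hB
  have hbn : B.card ≤ n := by
    have := Finset.card_le_card (Finset.mem_powerset.mp hB)
    simpa using this
  set b := B.card with hb
  have hcoeff := coeff_identity n k b hk1 hkn hbn
  have hcombined : (((n + 1 - k : ℕ) : ℝ) * (signedDom φ B *
        (if b ≤ n+1-k then (((n-b).choose (n+1-k-b) : ℕ) : ℝ) else 0))
      - (k:ℝ) * (signedDom φ B *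
        (if b ≤ n-k then (((n-b).choose (n-k-b) : ℕ) : ℝ) else 0)))
      = signedDom φ B * (if b ≤ n+1-k then (b:ℝ) * (((n-b).choose (k-1) : ℕ) : ℝ) else 0) := by
    rw [← hcoeff]; ring
  rw [hcombined]
  -- final per-term identity
  have hC1 : ((n-1).choose (n-k)) = ((n-1).choose (k-1)) := by
    rw [show n - k = (n-1) - (k-1) by omega]
    exact Nat.choose_symm (by omega)
  have hkey : (k : ℝ) * ((n.choose k : ℕ) : ℝ) = (n : ℝ) * (((n-1).choose (k-1) : ℕ) : ℝ) := by
    have := Nat.add_one_mul_choose_eq (n-1) (k-1)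
    rw [show n-1+1 = n by omega, show k-1+1 = k by omega] at this
    have hcast := congrArg (Nat.cast : ℕ → ℝ) this
    push_cast at hcast
    linarith
  have hCpos : (0:ℝ) < (((n-1).choose (n-k) : ℕ) : ℝ) := by
    have : 0 < (n-1).choose (n-k) := Nat.choose_pos (by omega)
    exact_mod_cast this
  have hnpos : (0:ℝ) < (n:ℝ) := by exact_mod_cast hn1
  have hkpos : (0:ℝ) < (k:ℝ) := by exact_mod_cast hk1
  have hNKpos : (0:ℝ) < ((n.choose k : ℕ) : ℝ) := by
    have : 0 < n.choose k := Nat.choose_pos hkn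
    exact_mod_cast this
  have hkne : (k:ℝ) ≠ 0 := ne_of_gt hkpos
  have hNKne : ((n.choose k : ℕ) : ℝ) ≠ 0 := ne_of_gt hNKpos
  by_cases hcase : b ≤ n - k + 1
  · rw [if_pos hcase, if_pos (show b ≤ n+1-k by omega)]
    rw [hC1, ← hkey]
    field_simp
  · rw [if_neg hcase, if_neg (show ¬ b ≤ n+1-k by omega)]
    ring
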